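/- Let C₀, C₁ ⊆ ℂ² be plane algebraic curves and suppose there exist points p₁, p₂ lying on both C₀ and C₁ with d(p₁,p₂) ≠ 0, such that the sets {(d(p₁,q), d(p₂,q)) : q ∈ C₀} and {(d(p₁,q), d(p₂,q)) : q ∈ C₁} are equal. Then there exists h ∈ E(ℂ) with h·p₁ = p₁ and h·p₂ = p₂ such that C₀ = h·C₁ (equality of subsets of ℂ²). -/

import Mathlib

open scoped Matrix

noncomputable section

/-- Squared distance between two points of `ℂ²`. -/
def sqDist (p q : ℂ × ℂ) : ℂ := (p.1 - q.1) ^ 2 + (p.2 - q.2) ^ 2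

/-- A complex orthogonal 2×2 matrix: `Aᵀ A = I`. -/
def IsOrtho (A : Matrix (Fin 2) (Fin 2) ℂ) : Prop := A.transpose * A = 1

/-- The affine map `x ↦ A x + v` on `ℂ²`. -/
def euclApply (A : Matrix (Fin 2) (Fin 2) ℂ) (v : ℂ × ℂ) (p : ℂ × ℂ) : ℂ × ℂ :=
  (A 0 0 * p.1 + A 0 1 * p.2 + v.1, A 1 0 * p.1 + A 1 1 * p.2 + v.2)

/-- A plane algebraic curve: the zero set of an irreducible polynomial of total degree `> 1`. -/
def IsPlaneCurve (C : Set (ℂ × ℂ)) : Prop :=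
  ∃ f : MvPolynomial (Fin 2) ℂ, Irreducible f ∧ 1 < f.totalDegree ∧
    C = {p : ℂ × ℂ | MvPolynomial.eval ![p.1, p.2] f = 0}

namespace TwoPointSlice

open MvPolynomial

lemma fiber_aux (e f g h x y x' y' a b : ℂ)
    (hs : (g-e)^2+(h-f)^2 ≠ 0)
    (ha : ((g-e)^2+(h-f)^2) * a = (g-e)^2-(h-f)^2)
    (hb : ((g-e)^2+(h-f)^2) * b = 2*(g-e)*(h-f))
    (h1 : (e-x)^2+(f-y)^2 = (e-x')^2+(f-y')^2)
    (h2 : (g-x)^2+(h-y)^2 = (g-x')^2+(h-y')^2) :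
    (x' = x ∧ y' = y) ∨ (x' = a*(x-e) + b*(y-f) + e ∧ y' = b*(x-e) - a*(y-f) + f) := by
  set u₁ := g - e with hu₁
  set u₂ := h - f with hu₂
  set s := u₁^2+u₂^2 with hsdef
  set T := (x-x')*(-u₂) + (y-y')*u₁ with hT
  set W := (x-e)*(-u₂) + (y-f)*u₁ with hW
  have hL : u₁*(x'-x) + u₂*(y'-y) = 0 := by linear_combination (h2 - h1)/2
  have hx1 : s*(x-x') = -(T*u₂) := by linear_combination (-u₁) * hL
  have hy1 : s*(y-y') = T*u₁ := by linear_combination (-u₂) * hL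
  have key : T * (T - 2*W) = 0 := by
    linear_combination (-s + ((x-e)*u₁+(y-f)*u₂+(x'-e)*u₁+(y'-f)*u₂)/2)*h1 -
      (((x-e)*u₁+(y-f)*u₂+(x'-e)*u₁+(y'-f)*u₂)/2)*h2
  rcases mul_eq_zero.mp key with hT0 | hTW
  · left
    rw [hT0] at hx1 hy1
    constructor
    · have : s*(x-x') = 0 := by rw [hx1]; ring
      rcases mul_eq_zero.mp this with h'|h'
      · exact absurd h' hs
      · exact (sub_eq_zero.mp h').symm
    · have : s*(y-y') = 0 := by rw [hy1]; ring
      rcases mul_eq_zero.mp this with h'|h'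
      · exact absurd h' hs
      · exact (sub_eq_zero.mp h').symm
  · right
    have hTW' : T = 2*W := by linear_combination hTW
    constructor
    · have : s * x' = s * (a*(x-e) + b*(y-f) + e) := by
        linear_combination (-(x-e))*ha + (-(y-f))*hb - hx1 + u₂*hTW'
      exact mul_left_cancel₀ hs this
    · have : s * y' = s * (b*(x-e) - a*(y-f) + f) := by
        linear_combination (y-f)*ha + (-(x-e))*hb - hy1 - u₁*hTW'
      exact mul_left_cancel₀ hs this

lemma eval_bind1 (x : Fin 2 → ℂ) (g : Fin 2 → MvPolynomial (Fin 2) ℂ)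
    (φ : MvPolynomial (Fin 2) ℂ) :
    eval x (bind₁ g φ) = eval (fun i => eval x (g i)) φ :=
  eval₂Hom_bind₁ _ _ _ _

lemma isUnit_eval_ne_zero {P : MvPolynomial (Fin 2) ℂ} (h : IsUnit P) (x : Fin 2 → ℂ) :
    eval x P ≠ 0 := by
  obtain ⟨Q, hQ⟩ := h.exists_right_inv
  intro h0
  have := congrArg (eval x) hQ
  rw [map_mul, map_one, h0, zero_mul] at this
  exact zero_ne_one this

/-- Substitution polynomials corresponding to the reflection. -/
def subL (a b w1 w2 : ℂ) : Fin 2 → MvPolynomial (Fin 2) ℂ :=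
  ![C a * X 0 + C b * X 1 + C w1, C b * X 0 - C a * X 1 + C w2]

lemma bind_self (a b w1 w2 : ℂ) (haa : a^2 + b^2 = 1)
    (hw1 : a*w1 + b*w2 + w1 = 0) (hw2 : b*w1 - a*w2 + w2 = 0)
    (P : MvPolynomial (Fin 2) ℂ) :
    bind₁ (subL a b w1 w2) (bind₁ (subL a b w1 w2) P) = P := by
  rw [bind₁_bind₁]
  have hCA : (C a : MvPolynomial (Fin 2) ℂ) * C a + C b * C b = 1 := by
    have := congrArg (C : ℂ → MvPolynomial (Fin 2) ℂ) haa
    simpa [map_add, map_mul, pow_two] using this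
  have hCW1 : (C a : MvPolynomial (Fin 2) ℂ) * C w1 + C b * C w2 + C w1 = 0 := by
    have := congrArg (C : ℂ → MvPolynomial (Fin 2) ℂ) hw1
    simpa [map_add, map_mul] using this
  have hCW2 : (C b : MvPolynomial (Fin 2) ℂ) * C w1 - C a * C w2 + C w2 = 0 := by
    have := congrArg (C : ℂ → MvPolynomial (Fin 2) ℂ) hw2
    simpa [map_add, map_mul, map_sub] using this
  have hfun : (fun i => bind₁ (subL a b w1 w2) (subL a b w1 w2 i)) = X := by
    funext i
    fin_cases i
    · show bind₁ (subL a b w1 w2) (subL a b w1 w2 0) = X 0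
      simp only [subL, Matrix.cons_val_zero, Matrix.cons_val_one, Matrix.head_cons,
        map_add, map_mul, map_sub, bind₁_X_right, bind₁_C_right, algHom_C,
        MvPolynomial.algebraMap_eq]
      linear_combination (X 0 : MvPolynomial (Fin 2) ℂ) * hCA + hCW1
    · show bind₁ (subL a b w1 w2) (subL a b w1 w2 1) = X 1
      simp only [subL, Matrix.cons_val_zero, Matrix.cons_val_one, Matrix.head_cons,
        map_add, map_mul, map_sub, bind₁_X_right, bind₁_C_right, algHom_C,
        MvPolynomial.algebraMap_eq]
      linear_combination (X 1 : MvPolynomial (Fin 2) ℂ) * hCA + hCW2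
  rw [hfun]
  simp [bind₁_X_left]

/-- The reflection map on `ℂ²`. -/
def refl2 (a b w1 w2 : ℂ) (z : ℂ × ℂ) : ℂ × ℂ :=
  (a*z.1 + b*z.2 + w1, b*z.1 - a*z.2 + w2)

lemma refl2_invol (a b w1 w2 : ℂ) (haa : a^2 + b^2 = 1)
    (hw1 : a*w1 + b*w2 + w1 = 0) (hw2 : b*w1 - a*w2 + w2 = 0) (z : ℂ × ℂ) :
    refl2 a b w1 w2 (refl2 a b w1 w2 z) = z := by
  unfold refl2
  refine Prod.ext ?_ ?_
  · show a*(a*z.1 + b*z.2 + w1) + b*(b*z.1 - a*z.2 + w2) + w1 = z.1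
    linear_combination z.1*haa + hw1
  · show b*(a*z.1 + b*z.2 + w1) - a*(b*z.1 - a*z.2 + w2) + w2 = z.2
    linear_combination z.2*haa + hw2

lemma eval_subL (a b w1 w2 : ℂ) (P : MvPolynomial (Fin 2) ℂ) (q : ℂ × ℂ) :
    eval ![q.1, q.2] (bind₁ (subL a b w1 w2) P)
      = eval ![(refl2 a b w1 w2 q).1, (refl2 a b w1 w2 q).2] P := by
  rw [eval_bind1]
  refine congrArg (fun v => eval v P) ?_
  funext i
  fin_cases i <;> simp [subL, refl2]

lemma euclApply_refl2 (a b w1 w2 : ℂ) :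
    euclApply ![![a,b],![b,-a]] (w1, w2) = refl2 a b w1 w2 := by
  funext z
  unfold euclApply refl2
  refine Prod.ext ?_ ?_ <;> simp <;> ring

lemma isOrtho_refl2 (a b : ℂ) (haa : a^2 + b^2 = 1) :
    IsOrtho ![![a,b],![b,-a]] := by
  unfold IsOrtho
  show (Matrix.of ![![a,b],![b,-a]])ᵀ * Matrix.of ![![a,b],![b,-a]] = 1
  ext i j
  fin_cases i <;> fin_cases j <;>
    simp [Matrix.mul_apply, Fin.sum_univ_two, Matrix.one_apply] <;>
    first
    | linear_combination haa
    | linear_combination -haa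
    | linear_combination (0:ℂ)*haa

end TwoPointSlice

open TwoPointSlice MvPolynomial

theorem curves_equal_of_two_point_slice (C₀ C₁ : Set (ℂ × ℂ))
    (hC₀ : IsPlaneCurve C₀) (hC₁ : IsPlaneCurve C₁)
    (p₁ p₂ : ℂ × ℂ) (hp₁₀ : p₁ ∈ C₀) (hp₁₁ : p₁ ∈ C₁) (hp₂₀ : p₂ ∈ C₀) (hp₂₁ : p₂ ∈ C₁)
    (hd : sqDist p₁ p₂ ≠ 0)
    (hslice : {x : ℂ × ℂ | ∃ q ∈ C₀, x = (sqDist p₁ q, sqDist p₂ q)} =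
              {x : ℂ × ℂ | ∃ q ∈ C₁, x = (sqDist p₁ q, sqDist p₂ q)}) :
    ∃ (A : Matrix (Fin 2) (Fin 2) ℂ) (v : ℂ × ℂ), IsOrtho A ∧
      euclApply A v p₁ = p₁ ∧ euclApply A v p₂ = p₂ ∧ C₀ = euclApply A v '' C₁ := by
  obtain ⟨f, hfi, -, hfC⟩ := hC₀
  obtain ⟨g, hgi, -, hgC⟩ := hC₁
  have hs : (p₂.1-p₁.1)^2+(p₂.2-p₁.2)^2 ≠ 0 := fun h => hd (by unfold sqDist; linear_combination h)
  set a : ℂ := ((p₂.1-p₁.1)^2-(p₂.2-p₁.2)^2)/((p₂.1-p₁.1)^2+(p₂.2-p₁.2)^2) with hadef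
  set b : ℂ := (2*(p₂.1-p₁.1)*(p₂.2-p₁.2))/((p₂.1-p₁.1)^2+(p₂.2-p₁.2)^2) with hbdef
  have ha : ((p₂.1-p₁.1)^2+(p₂.2-p₁.2)^2) * a = (p₂.1-p₁.1)^2-(p₂.2-p₁.2)^2 := by
    rw [hadef]; field_simp
  have hb : ((p₂.1-p₁.1)^2+(p₂.2-p₁.2)^2) * b = 2*(p₂.1-p₁.1)*(p₂.2-p₁.2) := by
    rw [hbdef]; field_simp
  have haa : a^2 + b^2 = 1 := by
    have h2 : ((p₂.1-p₁.1)^2+(p₂.2-p₁.2)^2)^2*(a^2+b^2)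
        = ((p₂.1-p₁.1)^2+(p₂.2-p₁.2)^2)^2*1 := by
      linear_combination (((p₂.1-p₁.1)^2+(p₂.2-p₁.2)^2)*a + ((p₂.1-p₁.1)^2-(p₂.2-p₁.2)^2))*ha
        + (((p₂.1-p₁.1)^2+(p₂.2-p₁.2)^2)*b + 2*(p₂.1-p₁.1)*(p₂.2-p₁.2))*hb
    exact mul_left_cancel₀ (pow_ne_zero 2 hs) h2
  set w1 : ℂ := p₁.1 - a*p₁.1 - b*p₁.2 with hw1def
  set w2 : ℂ := p₁.2 - b*p₁.1 + a*p₁.2 with hw2def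
  have hw1 : a*w1 + b*w2 + w1 = 0 := by rw [hw1def, hw2def]; linear_combination (-p₁.1)*haa
  have hw2 : b*w1 - a*w2 + w2 = 0 := by rw [hw1def, hw2def]; linear_combination (-p₁.2)*haa
  -- the key dichotomy for points of C₀
  have hsub : ∀ z : ℂ × ℂ, z ∈ C₀ →
      eval ![z.1, z.2] g = 0 ∨ eval ![z.1, z.2] (bind₁ (subL a b w1 w2) g) = 0 := by
    intro z hz
    have hmem : ((sqDist p₁ z, sqDist p₂ z) : ℂ × ℂ)
        ∈ {x : ℂ × ℂ | ∃ q ∈ C₁, x = (sqDist p₁ q, sqDist p₂ q)} := by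
      rw [← hslice]; exact ⟨z, hz, rfl⟩
    obtain ⟨q', hq'1, hq'e⟩ := hmem
    have h1 : sqDist p₁ z = sqDist p₁ q' := congrArg Prod.fst hq'e
    have h2 : sqDist p₂ z = sqDist p₂ q' := congrArg Prod.snd hq'e
    unfold sqDist at h1 h2
    have hfib := fiber_aux p₁.1 p₁.2 p₂.1 p₂.2 z.1 z.2 q'.1 q'.2 a b hs ha hb h1 h2
    have hgq' : eval ![q'.1, q'.2] g = 0 := by rw [hgC] at hq'1; exact hq'1
    rcases hfib with ⟨hx, hy⟩ | ⟨hx, hy⟩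
    · left
      have hzq : z = q' := Prod.ext hx.symm hy.symm
      rw [hzq]; exact hgq'
    · right
      rw [eval_subL]
      have hq : refl2 a b w1 w2 z = q' := by
        unfold refl2
        refine Prod.ext ?_ ?_
        · show a*z.1 + b*z.2 + w1 = q'.1
          rw [hx, hw1def]; ring
        · show b*z.1 - a*z.2 + w2 = q'.2
          rw [hy, hw2def]; ring
      rw [hq]; exact hgq'
  -- Nullstellensatz
  have hprime : Prime f := UniqueFactorizationMonoid.irreducible_iff_prime.mp hfi
  have hPI : (Ideal.span {f} : Ideal (MvPolynomial (Fin 2) ℂ)).IsPrime :=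
    (Ideal.span_singleton_prime hfi.ne_zero).mpr hprime
  have hmem : g * bind₁ (subL a b w1 w2) g ∈ Ideal.span {f} := by
    rw [← hPI.radical, ← MvPolynomial.vanishingIdeal_zeroLocus_eq_radical (K := ℂ),
      MvPolynomial.mem_vanishingIdeal_iff]
    intro x hx
    have hxf : eval x f = 0 :=
      (MvPolynomial.mem_zeroLocus_iff.mp hx) f (Ideal.subset_span rfl)
    have hxeq : ![x 0, x 1] = x := by funext i; fin_cases i <;> rfl
    have hz : ((x 0, x 1) : ℂ × ℂ) ∈ C₀ := by
      rw [hfC]; show eval ![x 0, x 1] f = 0; rw [hxeq]; exact hxf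
    have hd2 := hsub (x 0, x 1) hz
    rw [map_mul, ← hxeq]
    rcases hd2 with h | h
    · exact mul_eq_zero.mpr (Or.inl h)
    · exact mul_eq_zero.mpr (Or.inr h)
  have hdvd : f ∣ g * bind₁ (subL a b w1 w2) g := Ideal.mem_span_singleton.mp hmem
  rcases hprime.2.2 g _ hdvd with hcase | hcase
  · -- case `C₀ = C₁` : use the identity
    obtain ⟨t, ht⟩ := hcase
    rcases hgi.isUnit_or_isUnit ht with hu | hu
    · exact absurd hu hfi.not_isUnit
    have hCeq : C₀ = C₁ := by
      rw [hfC, hgC]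
      ext z
      simp only [Set.mem_setOf_eq]
      rw [ht, map_mul]
      constructor
      · intro h0; rw [h0, zero_mul]
      · intro h0
        rcases mul_eq_zero.mp h0 with h | h
        · exact h
        · exact absurd h (isUnit_eval_ne_zero hu _)
    have hid : euclApply 1 (0, 0) = id := by
      funext p
      simp [euclApply, Matrix.one_apply]
    exact ⟨1, (0, 0), by simp [IsOrtho], by rw [hid]; rfl, by rw [hid]; rfl,
      by rw [hCeq, hid, Set.image_id]⟩
  · -- case `C₀ = σ C₁` : use the reflection
    have hΦΦ := bind_self a b w1 w2 haa hw1 hw2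
    have h2 : bind₁ (subL a b w1 w2) f ∣ g := by
      have hmap := map_dvd (bind₁ (subL a b w1 w2)) hcase
      rwa [hΦΦ g] at hmap
    obtain ⟨t, ht⟩ := h2
    rcases hgi.isUnit_or_isUnit ht with hu | hu
    · exfalso
      apply hfi.not_isUnit
      have hmapu := hu.map (bind₁ (subL a b w1 w2))
      rwa [hΦΦ f] at hmapu
    refine ⟨![![a,b],![b,-a]], (w1, w2), isOrtho_refl2 a b haa, ?_, ?_, ?_⟩
    · rw [euclApply_refl2]
      unfold refl2
      refine Prod.ext ?_ ?_
      · show a*p₁.1 + b*p₁.2 + w1 = p₁.1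
        rw [hw1def]; ring
      · show b*p₁.1 - a*p₁.2 + w2 = p₁.2
        rw [hw2def]; ring
    · rw [euclApply_refl2]
      unfold refl2
      refine Prod.ext ?_ ?_
      · show a*p₂.1 + b*p₂.2 + w1 = p₂.1
        have c1 : ((p₂.1-p₁.1)^2+(p₂.2-p₁.2)^2) * (a*p₂.1 + b*p₂.2 + w1)
            = ((p₂.1-p₁.1)^2+(p₂.2-p₁.2)^2) * p₂.1 := by
          rw [hw1def]
          linear_combination (p₂.1-p₁.1)*ha + (p₂.2-p₁.2)*hb
        exact mul_left_cancel₀ hs c1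
      · show b*p₂.1 - a*p₂.2 + w2 = p₂.2
        have c2 : ((p₂.1-p₁.1)^2+(p₂.2-p₁.2)^2) * (b*p₂.1 - a*p₂.2 + w2)
            = ((p₂.1-p₁.1)^2+(p₂.2-p₁.2)^2) * p₂.2 := by
          rw [hw2def]
          linear_combination (-(p₂.2-p₁.2))*ha + (p₂.1-p₁.1)*hb
        exact mul_left_cancel₀ hs c2
    · rw [euclApply_refl2]
      ext z
      constructor
      · intro hz
        refine ⟨refl2 a b w1 w2 z, ?_, refl2_invol a b w1 w2 haa hw1 hw2 z⟩
        rw [hgC]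
        show eval ![(refl2 a b w1 w2 z).1, (refl2 a b w1 w2 z).2] g = 0
        rw [ht, map_mul]
        refine mul_eq_zero.mpr (Or.inl ?_)
        rw [eval_subL a b w1 w2 f (refl2 a b w1 w2 z), refl2_invol a b w1 w2 haa hw1 hw2]
        rw [hfC] at hz; exact hz
      · rintro ⟨y, hy1, rfl⟩
        rw [hfC]
        show eval ![(refl2 a b w1 w2 y).1, (refl2 a b w1 w2 y).2] f = 0
        rw [← eval_subL]
        have hgy : eval ![y.1, y.2] g = 0 := by rw [hgC] at hy1; exact hy1
        rw [ht, map_mul] at hgy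
        rcases mul_eq_zero.mp hgy with h | h
        · exact h
        · exact absurd h (isUnit_eval_ne_zero hu _)
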